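/- Let 1 ≤ l < k ≤ n−1 and η ∈ Γ_{k+1}. Then for every index p one has σ_{k−1}(η|p) > 0, σ_l(η|p) > 0, σ_k(η|p) > 0, and the quantity α_p := (σ_k(η|p)/σ_{k−1}(η|p)) · (σ_{l−1}(η|p)/σ_l(η|p)) satisfies 0 < α_p ≤ l(n−k)/(k(n−l)) < 1. -/

import Mathlib

open Multiset Polynomial

namespace NewtonAux

lemma esymm_zero' (s : Multiset ℝ) : s.esymm 0 = 1 := by
  simp [Multiset.esymm]

lemma esymm_one' (s : Multiset ℝ) : s.esymm 1 = s.sum := by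
  simp [Multiset.esymm, Multiset.powersetCard_one, Multiset.map_map, Function.comp_def]

lemma esymm_cons (a : ℝ) (s : Multiset ℝ) (k : ℕ) :
    (a ::ₘ s).esymm (k + 1) = s.esymm (k + 1) + a * s.esymm k := by
  simp only [Multiset.esymm, Multiset.powersetCard_cons, Multiset.map_add, Multiset.sum_add,
    Multiset.map_map, Function.comp_def, Multiset.prod_cons, ← Multiset.sum_map_mul_left]

lemma esymm_of_card_lt {s : Multiset ℝ} {k : ℕ} (h : Multiset.card s < k) : s.esymm k = 0 := by
  simp [Multiset.esymm, Multiset.powersetCard_eq_empty _ h]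

lemma esymm_card (s : Multiset ℝ) : s.esymm (Multiset.card s) = s.prod := by
  induction s using Multiset.induction with
  | empty => simp [Multiset.esymm]
  | cons a s ih =>
    rw [Multiset.card_cons, esymm_cons, esymm_of_card_lt (by simp), ih]
    simp

lemma sum_sq_identity (s : Multiset ℝ) :
    s.sum ^ 2 = (s.map (· ^ 2)).sum + 2 * s.esymm 2 := by
  induction s using Multiset.induction with
  | empty => simp [esymm_of_card_lt (show Multiset.card (0 : Multiset ℝ) < 2 by simp)]
  | cons a s ih =>
    have h2 : (a ::ₘ s).esymm 2 = s.esymm 2 + a * s.esymm 1 := esymm_cons a s 1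
    rw [Multiset.sum_cons, Multiset.map_cons, Multiset.sum_cons, h2, esymm_one']
    nlinarith [ih]

lemma sumsq_nonneg (s : Multiset ℝ) : 0 ≤ (s.map (· ^ 2)).sum := by
  apply Multiset.sum_nonneg
  intro x hx
  obtain ⟨y, _, rfl⟩ := Multiset.mem_map.mp hx
  positivity

lemma cs (s : Multiset ℝ) : s.sum ^ 2 ≤ (Multiset.card s : ℝ) * (s.map (· ^ 2)).sum := by
  induction s using Multiset.induction with
  | empty => simp
  | cons a s ih =>
    rcases Multiset.empty_or_exists_mem s with rfl | ⟨b, hb⟩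
    · simp
    · have hc : (1 : ℝ) ≤ (Multiset.card s : ℝ) := by
        exact_mod_cast Multiset.card_pos.mpr (fun h => by simp [h] at hb)
      have hT := sumsq_nonneg s
      rw [Multiset.sum_cons, Multiset.map_cons, Multiset.sum_cons, Multiset.card_cons]
      push_cast
      nlinarith [ih, sq_nonneg ((Multiset.card s : ℝ) * a - s.sum)]

lemma newton_one (s : Multiset ℝ) :
    ((Multiset.card s).choose 1 : ℝ) ^ 2 * (s.esymm 0 * s.esymm 2)
      ≤ ((Multiset.card s).choose 0 : ℝ) * ((Multiset.card s).choose 2 : ℝ) * s.esymm 1 ^ 2 := by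
  rcases Nat.lt_or_ge (Multiset.card s) 2 with h | h
  · rw [esymm_of_card_lt h]
    have : (0:ℝ) ≤ ((Multiset.card s).choose 2 : ℝ) * s.esymm 1 ^ 2 := by positivity
    simpa using this
  · have hid := sum_sq_identity s
    have hcs := cs s
    have hn : 1 ≤ Multiset.card s := by omega
    have hnat : (Multiset.card s).choose 2 * 2 = Multiset.card s * (Multiset.card s - 1) := by
      have := Nat.choose_succ_right_eq (Multiset.card s) 1
      rwa [Nat.choose_one_right] at this
    have h2 : ((Multiset.card s).choose 2 : ℝ) * 2
        = (Multiset.card s : ℝ) * ((Multiset.card s : ℝ) - 1) := by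
      have := congrArg (Nat.cast (R := ℝ)) hnat
      push_cast [Nat.cast_sub hn] at this
      linarith [this]
    rw [esymm_zero', esymm_one', Nat.choose_zero_right, Nat.choose_one_right]
    push_cast
    nlinarith [hid, hcs, h2, Nat.cast_nonneg (α := ℝ) (Multiset.card s), sumsq_nonneg s]

lemma esymm_inv : ∀ (s : Multiset ℝ), (0:ℝ) ∉ s → ∀ j, j ≤ Multiset.card s →
    s.prod * (s.map (·⁻¹)).esymm j = s.esymm (Multiset.card s - j) := by
  intro s
  induction s using Multiset.induction with
  | empty =>
    intro _ j hj
    have hj0 : j = 0 := by simpa using hj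
    subst hj0
    simp [esymm_zero']
  | cons a s ih =>
    intro h0 j hj
    have ha : a ≠ 0 := fun h => h0 (h ▸ Multiset.mem_cons_self a s)
    have h0s : (0:ℝ) ∉ s := fun h => h0 (Multiset.mem_cons_of_mem h)
    rcases j with _ | j'
    · simp only [Nat.sub_zero, Multiset.card_cons]
      rw [esymm_zero', mul_one, ← esymm_card (a ::ₘ s), Multiset.card_cons]
    · rw [Multiset.map_cons, Multiset.prod_cons, esymm_cons]
      have hinv : a * a⁻¹ = 1 := mul_inv_cancel₀ ha
      rcases Nat.lt_or_ge j' (Multiset.card s) with hlt | hge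
      · have i1 := ih h0s (j' + 1) hlt
        have i2 := ih h0s j' hlt.le
        have hc : Multiset.card (a ::ₘ s) - (j' + 1) = (Multiset.card s - (j' + 1)) + 1 := by
          rw [Multiset.card_cons]; omega
        rw [hc, esymm_cons]
        have hc2 : Multiset.card s - (j' + 1) + 1 = Multiset.card s - j' := by omega
        rw [hc2]
        calc a * s.prod * ((Multiset.map (·⁻¹) s).esymm (j' + 1)
              + a⁻¹ * (Multiset.map (·⁻¹) s).esymm j')
            = a * (s.prod * (Multiset.map (·⁻¹) s).esymm (j' + 1))
              + (a * a⁻¹) * (s.prod * (Multiset.map (·⁻¹) s).esymm j') := by ring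
          _ = s.esymm (Multiset.card s - j') + a * s.esymm (Multiset.card s - (j' + 1)) := by
              rw [i1, i2, hinv]; ring
      · have hj' : j' = Multiset.card s := by
          rw [Multiset.card_cons] at hj; omega
        subst hj'
        have hz : (Multiset.map (·⁻¹) s).esymm (Multiset.card s + 1) = 0 :=
          esymm_of_card_lt (by simp)
        have i2 := ih h0s (Multiset.card s) le_rfl
        rw [hz]
        have : Multiset.card (a ::ₘ s) - (Multiset.card s + 1) = 0 := by
          rw [Multiset.card_cons]; omega
        rw [this, esymm_zero']
        rw [Nat.sub_self, esymm_zero'] at i2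
        calc a * s.prod * (0 + a⁻¹ * (Multiset.map (·⁻¹) s).esymm (Multiset.card s))
            = (a * a⁻¹) * (s.prod * (Multiset.map (·⁻¹) s).esymm (Multiset.card s)) := by ring
          _ = 1 := by rw [hinv, i2]; ring

lemma choose_id (N j : ℕ) (hN : 1 ≤ N) :
    ((N - j : ℕ) : ℝ) * (N.choose j : ℝ) = (N : ℝ) * ((N - 1).choose j : ℝ) := by
  have h1 : N * (N - 1).choose j = N.choose (j + 1) * (j + 1) := by
    have := Nat.add_one_mul_choose_eq (N - 1) j
    rwa [Nat.sub_add_cancel hN] at this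
  have h2 : N.choose (j + 1) * (j + 1) = N.choose j * (N - j) := Nat.choose_succ_right_eq N j
  have h3 := congrArg (Nat.cast (R := ℝ)) (h1.trans h2)
  push_cast at h3
  linarith

lemma newton : ∀ (N : ℕ) (s : Multiset ℝ), Multiset.card s = N → ∀ m : ℕ, m + 2 ≤ N →
    ((N.choose (m + 1) : ℝ)) ^ 2 * (s.esymm m * s.esymm (m + 2))
      ≤ (N.choose m : ℝ) * (N.choose (m + 2) : ℝ) * s.esymm (m + 1) ^ 2 := by
  intro N
  induction N using Nat.strong_induction_on with
  | _ N IH =>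
    intro s hs m hm
    rcases Nat.eq_zero_or_pos m with rfl | hm1
    · have := newton_one s
      rw [hs] at this
      simpa using this
    rcases eq_or_lt_of_le hm with htop | hlt
    -- top case : m + 2 = N
    · by_cases h0 : (0:ℝ) ∈ s
      · have hz : s.esymm (m + 2) = 0 := by
          rw [htop, ← hs, esymm_card]
          exact Multiset.prod_eq_zero h0
        rw [hz]
        have : (0:ℝ) ≤ (N.choose m : ℝ) * (N.choose (m + 2) : ℝ) * s.esymm (m + 1) ^ 2 := by
          positivity
        simpa using this
      · set z := s.map (·⁻¹) with hzdef
        have hcardz : Multiset.card z = N := by rw [hzdef, Multiset.card_map, hs]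
        have hinv := esymm_inv s h0
        have i2 : s.prod * z.esymm 2 = s.esymm m := by
          have := hinv 2 (by omega)
          rwa [hs, (by omega : N - 2 = m)] at this
        have i1 : s.prod * z.esymm 1 = s.esymm (m + 1) := by
          have := hinv 1 (by omega)
          rwa [hs, (by omega : N - 1 = m + 1)] at this
        have i0 : s.esymm (m + 2) = s.prod := by rw [htop, ← hs, esymm_card]
        have hsym : N.choose m = N.choose 2 := by
          rw [(by omega : m = N - 2)]; exact Nat.choose_symm (by omega)
        have hsym1 : N.choose (m + 1) = N := by
          rw [(by omega : m + 1 = N - 1), Nat.choose_symm (by omega), Nat.choose_one_right]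
        have hsym2 : N.choose (m + 2) = 1 := by rw [htop, Nat.choose_self]
        have hN1 := newton_one z
        rw [hcardz, esymm_zero', esymm_one', Nat.choose_zero_right, Nat.choose_one_right] at hN1
        -- hN1 : (N:ℝ)^2 * (1 * z.esymm 2) ≤ 1 * (N.choose 2 : ℝ) * z.sum ^ 2
        have hE1 : z.esymm 1 = z.sum := esymm_one' z
        norm_num at hN1
        rw [hsym, hsym1, hsym2, i0, ← i1, ← i2, hE1]
        push_cast
        nlinarith [mul_le_mul_of_nonneg_left hN1 (sq_nonneg s.prod)]
    -- derivative case : m + 2 < N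
    · set s' := s.map (fun a => -a) with hs'def
      set P := (s'.map (fun a => X - C a)).prod with hPdef
      have hmonic : P.Monic :=
        monic_multiset_prod_of_monic _ _ (fun a _ => monic_X_sub_C a)
      have hcards' : Multiset.card s' = N := by rw [hs'def, Multiset.card_map, hs]
      have hdeg : P.natDegree = N := by
        rw [hPdef, natDegree_multiset_prod_X_sub_C_eq_card, hcards']
      have hroots : P.roots = s' := roots_multiset_prod_X_sub_C s'
      set Q := derivative P with hQdef
      have hcardQle : Multiset.card Q.roots ≤ N - 1 :=
        (card_roots' Q).trans ((natDegree_derivative_le P).trans (by rw [hdeg]))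
      have hcardQge : N ≤ Multiset.card Q.roots + 1 := by
        have := card_roots_le_derivative P
        rwa [hroots, hcards'] at this
      have hcardQ : Multiset.card Q.roots = N - 1 := by omega
      have hQdeg : Q.natDegree = N - 1 :=
        le_antisymm ((natDegree_derivative_le P).trans (by rw [hdeg]))
          (hcardQ ▸ card_roots' Q)
      have hPs : s'.map (fun a => X - C a) = s.map (fun a => X + C a) := by
        rw [hs'def, Multiset.map_map]
        apply Multiset.map_congr rfl
        intro x _
        simp [sub_neg_eq_add]
      have hPcoeff : ∀ j, j ≤ N → P.coeff (N - j) = s.esymm j := by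
        intro j hj
        rw [hPdef, hPs, Multiset.prod_X_add_C_coeff s (by omega : N - j ≤ Multiset.card s), hs,
          (by omega : N - (N - j) = j)]
      set t := Q.roots.map (fun a => -a) with htdef
      have hcardt : Multiset.card t = N - 1 := by rw [htdef, Multiset.card_map, hcardQ]
      have key : ∀ j, j ≤ N - 1 → (N : ℝ) * t.esymm j = ((N - j : ℕ) : ℝ) * s.esymm j := by
        intro j hj
        have hPN : P.coeff N = 1 := by
          have := hmonic.coeff_natDegree
          rwa [hdeg] at this
        have hlead : Q.leadingCoeff = N := by
          rw [leadingCoeff, hQdeg]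
          have hd := coeff_derivative P (N - 1)
          rw [(by omega : N - 1 + 1 = N), hPN] at hd
          rw [← hQdef] at hd
          rw [hd, one_mul]
          have hcst := congrArg (Nat.cast (R := ℝ)) (by omega : (N - 1) + 1 = N)
          push_cast at hcst ⊢
          linarith
        have hvieta := Polynomial.coeff_eq_esymm_roots_of_card
          (p := Q) (hcardQ.trans hQdeg.symm) (k := N - 1 - j) (by omega)
        rw [hQdeg, hlead, (by omega : N - 1 - (N - 1 - j) = j)] at hvieta
        have harith : ((N - 1 - j : ℕ) : ℝ) + 1 = ((N - j : ℕ) : ℝ) := by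
          exact_mod_cast congrArg (Nat.cast (R := ℝ)) (by omega : (N - 1 - j) + 1 = N - j)
        have hQc : Q.coeff (N - 1 - j) = P.coeff (N - j) * ((N - j : ℕ) : ℝ) := by
          have hd := coeff_derivative P (N - 1 - j)
          rw [(by omega : N - 1 - j + 1 = N - j), harith] at hd
          rw [← hQdef] at hd
          exact hd
        have htj : t.esymm j = (-1 : ℝ) ^ j * Q.roots.esymm j := Multiset.esymm_neg _ _
        rw [hPcoeff j (by omega)] at hQc
        rw [htj]
        rw [hQc] at hvieta
        -- hvieta : s.esymm j * (N - j) = N * (-1)^j * Q.roots.esymm j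
        calc (N:ℝ) * ((-1:ℝ)^j * Q.roots.esymm j) = (N:ℝ) * (-1:ℝ)^j * Q.roots.esymm j := by ring
          _ = s.esymm j * ((N - j : ℕ):ℝ) := hvieta.symm
          _ = ((N - j : ℕ):ℝ) * s.esymm j := by ring
      have hIH := IH (N - 1) (by omega) t hcardt m (by omega)
      set am := ((N - m : ℕ) : ℝ) with hamdef
      set a1 := ((N - (m+1) : ℕ) : ℝ) with ha1def
      set a2 := ((N - (m+2) : ℕ) : ℝ) with ha2def
      have hampos : 0 < am := by rw [hamdef]; exact_mod_cast Nat.sub_pos_of_lt (by omega)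
      have ha1pos : 0 < a1 := by rw [ha1def]; exact_mod_cast Nat.sub_pos_of_lt (by omega)
      have ha2pos : 0 < a2 := by rw [ha2def]; exact_mod_cast Nat.sub_pos_of_lt (by omega)
      have hfm := key m (by omega)
      have hf1 := key (m+1) (by omega)
      have hf2 := key (m+2) (by omega)
      have hcm := choose_id N m (by omega)
      have hc1 := choose_id N (m+1) (by omega)
      have hc2 := choose_id N (m+2) (by omega)
      rw [← hamdef] at hfm hcm
      rw [← ha1def] at hf1 hc1
      rw [← ha2def] at hf2 hc2
      have H4 := mul_le_mul_of_nonneg_left hIH (show (0:ℝ) ≤ (N:ℝ)^4 by positivity)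
      have hL : (N:ℝ)^4 * (((N-1).choose (m+1) : ℝ)^2 * (t.esymm m * t.esymm (m+2)))
          = am * a1^2 * a2 * ((N.choose (m+1) : ℝ)^2 * (s.esymm m * s.esymm (m+2))) := by
        linear_combination (-(((N:ℝ)*((N-1).choose (m+1):ℝ) + a1*(N.choose (m+1):ℝ))
            * ((N:ℝ)*t.esymm m) * ((N:ℝ)*t.esymm (m+2)))) * hc1
          + ((a1*(N.choose (m+1):ℝ))^2 * ((N:ℝ)*t.esymm (m+2))) * hfm
          + ((a1*(N.choose (m+1):ℝ))^2 * (am*s.esymm m)) * hf2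
      have hR : (N:ℝ)^4 * (((N-1).choose m : ℝ) * ((N-1).choose (m+2) : ℝ) * t.esymm (m+1)^2)
          = am * a1^2 * a2 * ((N.choose m : ℝ) * (N.choose (m+2) : ℝ) * s.esymm (m+1)^2) := by
        linear_combination (-(((N:ℝ)*((N-1).choose (m+2):ℝ)) * ((N:ℝ)*t.esymm (m+1))^2)) * hcm
          - ((am*(N.choose m:ℝ)) * ((N:ℝ)*t.esymm (m+1))^2) * hc2
          + ((am*(N.choose m:ℝ)) * (a2*(N.choose (m+2):ℝ))
            * ((N:ℝ)*t.esymm (m+1) + a1*s.esymm (m+1))) * hf1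
      rw [hL, hR] at H4
      exact le_of_mul_le_mul_left H4 (by positivity)

lemma choose_logconcave (N m : ℕ) (h : m + 2 ≤ N) :
    (N.choose m : ℝ) * (N.choose (m + 2) : ℝ) < ((N.choose (m + 1) : ℝ)) ^ 2 := by
  have q1 : (N.choose (m+1) : ℝ) * (m+1) = (N.choose m : ℝ) * ((N:ℝ) - m) := by
    have := congrArg (Nat.cast (R := ℝ)) (Nat.choose_succ_right_eq N m)
    push_cast [Nat.cast_sub (by omega : m ≤ N)] at this
    linarith
  have q2 : (N.choose (m+2) : ℝ) * (m+2) = (N.choose (m+1) : ℝ) * ((N:ℝ) - m - 1) := by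
    have := congrArg (Nat.cast (R := ℝ)) (Nat.choose_succ_right_eq N (m+1))
    push_cast [Nat.cast_sub (by omega : m + 1 ≤ N)] at this
    linarith
  have hc0 : (0:ℝ) < (N.choose m : ℝ) := by exact_mod_cast Nat.choose_pos (by omega : m ≤ N)
  have hc1 : (0:ℝ) < (N.choose (m+1) : ℝ) := by
    exact_mod_cast Nat.choose_pos (by omega : m + 1 ≤ N)
  have hc2 : (0:ℝ) < (N.choose (m+2) : ℝ) := by
    exact_mod_cast Nat.choose_pos (by omega : m + 2 ≤ N)
  have hNm : (0:ℝ) < (N:ℝ) - m - 1 := by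
    have : (m:ℝ) + 2 ≤ (N:ℝ) := by exact_mod_cast h
    linarith
  nlinarith [q1, q2, hc0, hc1, hc2, hNm, mul_pos hc0 hc1, mul_pos hc1 hc2]

lemma claimB : ∀ (m : ℕ) (a : ℝ) (s : Multiset ℝ),
    (∀ j, 1 ≤ j → j ≤ m + 1 → 0 < (a ::ₘ s).esymm j) →
    ∀ j, j ≤ m → 0 < s.esymm j := by
  intro m
  induction m with
  | zero =>
    intro a s _ j hj
    have : j = 0 := by omega
    subst this
    rw [esymm_zero']
    norm_num
  | succ m ih =>
    intro a s h j hj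
    have hprev : ∀ i, i ≤ m → 0 < s.esymm i :=
      ih a s (fun i h1 h2 => h i h1 (by omega))
    rcases Nat.lt_or_ge j (m + 1) with hjm | hjm
    · exact hprev j (by omega)
    have hj1 : j = m + 1 := by omega
    subst hj1
    have hA := h (m + 1) (by omega) (by omega)
    have hB := h (m + 2) (by omega) (by omega)
    rw [esymm_cons] at hA
    rw [show m + 2 = (m + 1) + 1 from rfl, esymm_cons] at hB
    have hem : 0 < s.esymm m := hprev m le_rfl
    by_contra hcon
    push_neg at hcon
    rcases le_or_gt a 0 with ha | ha
    · nlinarith [hA, hem, hcon, ha]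
    · rcases Nat.lt_or_ge (Multiset.card s) (m + 2) with hcard | hcard
      · rw [esymm_of_card_lt hcard] at hB
        nlinarith [hB, ha, hcon]
      · have hNT := newton (Multiset.card s) s rfl m hcard
        have hLC := choose_logconcave (Multiset.card s) m hcard
        have he2 : 0 < s.esymm (m + 2) := by nlinarith [hB, ha, hcon]
        have hXY : s.esymm (m + 1) ^ 2 < s.esymm m * s.esymm (m + 2) := by
          nlinarith [hA, hB, ha, hcon, hem, he2, mul_pos ha hem]
        have hc1 : (0:ℝ) < ((Multiset.card s).choose (m+1) : ℝ) := by
          exact_mod_cast Nat.choose_pos (by omega : m + 1 ≤ Multiset.card s)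
        have t2 : (↑((Multiset.card s).choose m) : ℝ) * ↑((Multiset.card s).choose (m+2))
            * s.esymm (m+1)^2 ≤ ↑((Multiset.card s).choose (m+1))^2 * s.esymm (m+1)^2 :=
          mul_le_mul_of_nonneg_right hLC.le (sq_nonneg _)
        have t3 : (↑((Multiset.card s).choose (m+1)) : ℝ)^2 * s.esymm (m+1)^2
            < ↑((Multiset.card s).choose (m+1))^2 * (s.esymm m * s.esymm (m+2)) :=
          mul_lt_mul_of_pos_left hXY (by positivity)
        linarith [hNT, t2, t3]

lemma chain (s : Multiset ℝ) (K : ℕ) (hK : K ≤ Multiset.card s)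
    (hpos : ∀ j, j ≤ K → 0 < s.esymm j) :
    ∀ (l' d : ℕ), l' + 1 + d ≤ K →
    ((l' + 1 + d : ℕ) : ℝ) * ((Multiset.card s : ℝ) - (l' + 1) + 1) * s.esymm (l' + 1 + d) * s.esymm l'
      ≤ ((l' + 1 : ℕ) : ℝ) * ((Multiset.card s : ℝ) - (l' + 1 + d) + 1) * s.esymm (l' + d) * s.esymm (l' + 1) := by
  intro l' d
  induction d with
  | zero =>
    intro _
    push_cast
    ring_nf
    exact le_refl _
  | succ d ihd =>
    intro h
    have IH := ihd (by omega)
    rw [show l' + 1 + d = l' + d + 1 from by omega] at IH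
    rw [show l' + 1 + (d + 1) = l' + d + 2 from by omega,
        show l' + (d + 1) = l' + d + 1 from by omega]
    have hc2K : l' + d + 2 ≤ Multiset.card s := by omega
    have hNT := newton (Multiset.card s) s rfl (l' + d) hc2K
    have q1 : ((Multiset.card s).choose (l'+d+2) : ℝ) * ((l':ℝ) + d + 2)
        = ((Multiset.card s).choose (l'+d+1) : ℝ) * ((Multiset.card s : ℝ) - (l' + d + 1)) := by
      have hq := Nat.choose_succ_right_eq (Multiset.card s) (l'+d+1)
      have := congrArg (Nat.cast (R := ℝ)) hq
      push_cast [Nat.cast_sub (by omega : l' + d + 1 ≤ Multiset.card s)] at this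
      push_cast
      linarith
    have q2 : ((Multiset.card s).choose (l'+d+1) : ℝ) * ((l':ℝ) + d + 1)
        = ((Multiset.card s).choose (l'+d) : ℝ) * ((Multiset.card s : ℝ) - (l' + d)) := by
      have hq := Nat.choose_succ_right_eq (Multiset.card s) (l'+d)
      have := congrArg (Nat.cast (R := ℝ)) hq
      push_cast [Nat.cast_sub (by omega : l' + d ≤ Multiset.card s)] at this
      push_cast
      linarith
    have hckpos : (0:ℝ) < ((Multiset.card s).choose (l'+d+1) : ℝ) := by
      exact_mod_cast Nat.choose_pos (by omega : l' + d + 1 ≤ Multiset.card s)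
    have hcbig : ((l':ℝ) + d + 2) ≤ (Multiset.card s : ℝ) := by exact_mod_cast hc2K
    set cr := (Multiset.card s : ℝ) with hcrdef
    have hfac : (0:ℝ) ≤ ((l':ℝ) + d + 2) * (cr - (l' + d + 1) + 1) := by
      have hd0 : (0:ℝ) ≤ (d:ℝ) := Nat.cast_nonneg d
      have hl0 : (0:ℝ) ≤ (l':ℝ) := Nat.cast_nonneg l'
      nlinarith [hd0, hl0, hcbig]
    have hmul := mul_le_mul_of_nonneg_left hNT hfac
    have eqL : ((l':ℝ) + d + 2) * (cr - (l' + d + 1) + 1)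
          * (((Multiset.card s).choose (l'+d+1) : ℝ)^2 * (s.esymm (l'+d) * s.esymm (l'+d+2)))
        = ((Multiset.card s).choose (l'+d+1) : ℝ)^2
          * (((l':ℝ) + d + 2) * (cr - (l' + d + 1) + 1) * s.esymm (l'+d+2) * s.esymm (l'+d)) := by
      ring
    have eqR : ((l':ℝ) + d + 2) * (cr - (l' + d + 1) + 1)
          * (((Multiset.card s).choose (l'+d) : ℝ) * ((Multiset.card s).choose (l'+d+2) : ℝ)
            * s.esymm (l'+d+1) ^ 2)
        = ((Multiset.card s).choose (l'+d+1) : ℝ)^2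
          * (((l':ℝ) + d + 1) * (cr - (l' + d + 1)) * s.esymm (l'+d+1) ^ 2) := by
      have q2' : ((Multiset.card s).choose (l'+d) : ℝ) * (cr - (l' + d + 1) + 1)
          = ((Multiset.card s).choose (l'+d+1) : ℝ) * ((l':ℝ) + d + 1) := by
        rw [hcrdef]; linarith [q2]
      linear_combination (((Multiset.card s).choose (l'+d+2) : ℝ) * ((l':ℝ) + d + 2)
          * s.esymm (l'+d+1) ^ 2) * q2'
        + (((Multiset.card s).choose (l'+d+1) : ℝ) * ((l':ℝ) + d + 1)
          * s.esymm (l'+d+1) ^ 2) * q1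
    rw [eqL, eqR] at hmul
    have W := le_of_mul_le_mul_left hmul (pow_pos hckpos 2)
    -- positivity facts
    have hd0 : (0:ℝ) ≤ (d:ℝ) := Nat.cast_nonneg d
    have hcx : (0:ℝ) < cr - l' := by linarith
    have hcxy : (0:ℝ) < cr - (l' + d + 1) + 1 := by linarith
    have hcxy1 : (0:ℝ) < cr - (l' + d + 1) := by linarith
    have hu : 0 < s.esymm l' := hpos l' (by omega)
    have hv : 0 < s.esymm (l'+1) := hpos (l'+1) (by omega)
    have he0 : 0 < s.esymm (l'+d) := hpos (l'+d) (by omega)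
    have he1 : 0 < s.esymm (l'+d+1) := hpos (l'+d+1) (by omega)
    have he2 : 0 < s.esymm (l'+d+2) := hpos (l'+d+2) (by omega)
    have step1 := mul_le_mul_of_nonneg_left W
      (le_of_lt (mul_pos hcx hu) : (0:ℝ) ≤ (cr - l') * s.esymm l')
    have step2 := mul_le_mul_of_nonneg_left IH
      (le_of_lt (mul_pos hcxy1 he1) : (0:ℝ) ≤ (cr - (l' + d + 1)) * s.esymm (l'+d+1))
    push_cast at IH step2 ⊢
    by_contra hcon
    push_neg at hcon
    have step3 := mul_lt_mul_of_pos_left hcon (mul_pos hcxy he0)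
    linarith [step1, step2, step3]
end NewtonAux

/-- The `m`-th elementary symmetric function of `x ∈ ℝⁿ`. -/
noncomputable def esym (n m : ℕ) (x : Fin n → ℝ) : ℝ :=
  ∑ s ∈ Finset.univ.powersetCard m, ∏ i ∈ s, x i

/-- `σ_m(x|p)`: the `m`-th elementary symmetric function of the vector obtained from `x`
by deleting the entry `x p`. -/
noncomputable def esymDel (n m : ℕ) (x : Fin n → ℝ) (p : Fin n) : ℝ :=
  ∑ s ∈ (Finset.univ.erase p).powersetCard m, ∏ i ∈ s, x i

/-- The Gårding cone `Γ_k ⊂ ℝⁿ`. -/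
def GardingCone (n k : ℕ) : Set (Fin n → ℝ) :=
  {x | ∀ i : ℕ, 1 ≤ i → i ≤ k → 0 < esym n i x}

theorem stmt_7 (n k l : ℕ) (hl1 : 1 ≤ l) (hlk : l < k) (hkn : k ≤ n - 1)
    (η : Fin n → ℝ) (hη : η ∈ GardingCone n (k + 1)) (p : Fin n) :
    0 < esymDel n (k - 1) η p ∧ 0 < esymDel n l η p ∧ 0 < esymDel n k η p ∧
    0 < (esymDel n k η p / esymDel n (k - 1) η p) *
        (esymDel n (l - 1) η p / esymDel n l η p) ∧
    (esymDel n k η p / esymDel n (k - 1) η p) *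
        (esymDel n (l - 1) η p / esymDel n l η p)
      ≤ (l : ℝ) * ((n : ℝ) - (k : ℝ)) / ((k : ℝ) * ((n : ℝ) - (l : ℝ))) ∧
    (l : ℝ) * ((n : ℝ) - (k : ℝ)) / ((k : ℝ) * ((n : ℝ) - (l : ℝ))) < 1 := by
  have hn : k + 1 ≤ n := by omega
  set μ : Multiset ℝ := (Finset.univ.erase p).val.map η with hμ
  have hdel : ∀ m : ℕ, esymDel n m η p = μ.esymm m := fun m =>
    (Finset.esymm_map_val η _ m).symm
  have hcardμ : Multiset.card μ = n - 1 := by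
    rw [hμ, Multiset.card_map]
    have h1 : (Finset.univ.erase p).card = n - 1 := by
      rw [Finset.card_erase_of_mem (Finset.mem_univ p), Finset.card_univ, Fintype.card_fin]
    exact h1
  have hcons : Finset.univ.val.map η = η p ::ₘ μ := by
    rw [hμ, Finset.erase_val, ← Multiset.map_cons,
      Multiset.cons_erase (by simp : p ∈ Finset.univ.val)]
  have hfull : ∀ j, 1 ≤ j → j ≤ k + 1 → 0 < (η p ::ₘ μ).esymm j := by
    intro j h1 h2
    rw [← hcons]
    have h3 := hη j h1 h2
    rwa [show esym n j η = (Finset.univ.val.map η).esymm j from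
      (Finset.esymm_map_val η _ j).symm] at h3
  have hposμ : ∀ j, j ≤ k → 0 < μ.esymm j := NewtonAux.claimB k (η p) μ hfull
  have hEk : 0 < μ.esymm k := hposμ k le_rfl
  have hEk1 : 0 < μ.esymm (k - 1) := hposμ (k - 1) (by omega)
  have hEl : 0 < μ.esymm l := hposμ l (by omega)
  have hEl1 : 0 < μ.esymm (l - 1) := hposμ (l - 1) (by omega)
  have hchain := NewtonAux.chain μ k (by rw [hcardμ]; omega) hposμ
    (l - 1) (k - l) (by omega)
  rw [show l - 1 + 1 + (k - l) = k from by omega, show l - 1 + (k - l) = k - 1 from by omega,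
    show l - 1 + 1 = l from by omega, hcardμ] at hchain
  have c1 : ((l - 1 : ℕ) : ℝ) = (l : ℝ) - 1 := by
    push_cast [Nat.cast_sub hl1]; ring
  have c2 : ((k - l : ℕ) : ℝ) = (k : ℝ) - l := by
    push_cast [Nat.cast_sub hlk.le]; ring
  have c3 : ((n - 1 : ℕ) : ℝ) = (n : ℝ) - 1 := by
    push_cast [Nat.cast_sub (by omega : 1 ≤ n)]; ring
  rw [c1, c2, c3] at hchain
  have hch : (k : ℝ) * ((n : ℝ) - l) * μ.esymm k * μ.esymm (l - 1)
      ≤ (l : ℝ) * ((n : ℝ) - k) * μ.esymm (k - 1) * μ.esymm l := by nlinarith [hchain]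
  have hk0 : (0 : ℝ) < (k : ℝ) := by exact_mod_cast (by omega : 0 < k)
  have hl0 : (0 : ℝ) < (l : ℝ) := by exact_mod_cast hl1
  have hnl : (0 : ℝ) < (n : ℝ) - l := by
    have : (l : ℝ) + 2 ≤ (n : ℝ) := by exact_mod_cast (by omega : l + 2 ≤ n)
    linarith
  have hnk : (0 : ℝ) < (n : ℝ) - k := by
    have : (k : ℝ) + 1 ≤ (n : ℝ) := by exact_mod_cast hn
    linarith
  have hkl : (l : ℝ) < (k : ℝ) := by exact_mod_cast hlk
  simp only [hdel]
  refine ⟨hEk1, hEl, hEk, ?_, ?_, ?_⟩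
  · exact mul_pos (div_pos hEk hEk1) (div_pos hEl1 hEl)
  · rw [div_mul_div_comm, div_le_div_iff₀ (by positivity) (by positivity)]
    nlinarith [hch]
  · rw [div_lt_one (by positivity)]
    nlinarith [mul_pos (sub_pos.mpr hkl) (by exact_mod_cast (by omega : 0 < n) : (0:ℝ) < (n:ℝ))]
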